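/- Let d ≥ d' ≥ 1, let π : ℝ^d → ℝ^{d'} be a surjective linear map with π(ℤ^d) = ℤ^{d'}, and let P ⊆ ℝ^d be a full-dimensional rational polytope. Then μ^F(π(P)) ≤ μ^F(P), where μ^F(π(P)) is computed in ℝ^{d'} with respect to the lattice ℤ^{d'}. -/

import Mathlib

open Set

noncomputable section

/-- The pairing `⟨a, x⟩ = ∑ i, a i * x i` of an integer linear functional with a point. -/
def pair {d : ℕ} (a : Fin d → ℤ) (x : Fin d → ℝ) : ℝ := ∑ i, (a i : ℝ) * x i

/-- The support function `h_P(a) = min_{x ∈ P} ⟨a, x⟩`. -/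
def suppFn {d : ℕ} (P : Set (Fin d → ℝ)) (a : Fin d → ℤ) : ℝ := sInf (pair a '' P)

/-- The Fine adjoint polytope `P^{F(s)}`. -/
def fineAdjoint {d : ℕ} (P : Set (Fin d → ℝ)) (s : ℝ) : Set (Fin d → ℝ) :=
  {x | ∀ a : Fin d → ℤ, a ≠ 0 → suppFn P a + s ≤ pair a x}

/-- The Fine number `n^F(P) = sup {s > 0 : P^{F(s)} ≠ ∅}`. -/
def fineNumber {d : ℕ} (P : Set (Fin d → ℝ)) : ℝ :=
  sSup {s : ℝ | 0 < s ∧ (fineAdjoint P s).Nonempty}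

/-- The Fine ℚ-codegree `μ^F(P) = (n^F(P))⁻¹`. -/
def fineCodeg {d : ℕ} (P : Set (Fin d → ℝ)) : ℝ := (fineNumber P)⁻¹

/-- The Fine core `core^F(P) = P^{F(n^F(P))}`. -/
def fineCore {d : ℕ} (P : Set (Fin d → ℝ)) : Set (Fin d → ℝ) := fineAdjoint P (fineNumber P)

/-- A rational polytope: the convex hull of finitely many rational points. -/
def IsRationalPolytope {d : ℕ} (P : Set (Fin d → ℝ)) : Prop :=
  ∃ V : Finset (Fin d → ℝ), V.Nonempty ∧ (∀ v ∈ V, ∀ i, ∃ q : ℚ, v i = (q : ℝ)) ∧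
    P = convexHull ℝ (V : Set (Fin d → ℝ))

/-- A lattice polytope: the convex hull of finitely many integer points. -/
def IsLatticePolytope {d : ℕ} (P : Set (Fin d → ℝ)) : Prop :=
  ∃ V : Finset (Fin d → ℝ), V.Nonempty ∧ (∀ v ∈ V, ∀ i, ∃ n : ℤ, v i = (n : ℝ)) ∧
    P = convexHull ℝ (V : Set (Fin d → ℝ))

/-- Full-dimensional: the affine hull is all of `ℝ^d`. -/
def IsFullDim {d : ℕ} (P : Set (Fin d → ℝ)) : Prop := affineSpan ℝ P = ⊤

/-- A nonzero integer functional `a` is a Fine core normal of `P` if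
`⟨a, y⟩ = h_P(a) + n^F(P)` for every `y` in the Fine core of `P`. -/
def IsFineCoreNormal {d : ℕ} (P : Set (Fin d → ℝ)) (a : Fin d → ℤ) : Prop :=
  a ≠ 0 ∧ ∀ y ∈ fineCore P, pair a y = suppFn P a + fineNumber P

/-- The set of integer points of `ℝ^k`. -/
def intPts (k : ℕ) : Set (Fin k → ℝ) := {x | ∀ i, ∃ n : ℤ, x i = (n : ℝ)}

/-- The Fine spectrum in dimension `k`. -/
def fineSpec (k : ℕ) : Set ℝ :=
  {r | ∃ P : Set (Fin k → ℝ), IsLatticePolytope P ∧ IsFullDim P ∧ r = fineCodeg P}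

/-- Unimodular equivalence of subsets of `ℝ^k`. -/
def UnimodEquiv {k : ℕ} (P Q : Set (Fin k → ℝ)) : Prop :=
  ∃ U : Matrix (Fin k) (Fin k) ℤ, IsUnit U.det ∧ ∃ v : Fin k → ℤ,
    P = (fun x => fun i => (∑ j, (U i j : ℝ) * x j) + (v i : ℝ)) '' Q

/-- The standard simplex `Δ_k = conv{0, e_1, ..., e_k}`. -/
def stdSimp (k : ℕ) : Set (Fin k → ℝ) :=
  convexHull ℝ (insert (0 : Fin k → ℝ) (Set.range fun i => Pi.single i (1 : ℝ)))

/-- The lattice pyramid `Pyr(Q) = conv((Q × {1}) ∪ {0})`. -/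
def pyrSet {k : ℕ} (Q : Set (Fin k → ℝ)) : Set (Fin (k + 1) → ℝ) :=
  convexHull ℝ (((fun x => Fin.snoc x (1 : ℝ)) '' Q) ∪ {0})

/-- Twice the standard triangle, `2Δ₂ = conv{(0,0),(2,0),(0,2)}`. -/
def twoDelta2 : Set (Fin 2 → ℝ) :=
  convexHull ℝ ({![0, 0], ![2, 0], ![0, 2]} : Set (Fin 2 → ℝ))

/-- The `m`-fold iterated lattice pyramid over `2Δ₂`. -/
def iterPyr : (m : ℕ) → Set (Fin (2 + m) → ℝ)
  | 0 => twoDelta2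
  | m + 1 => pyrSet (iterPyr m)

end

section aux

lemma pair_neg' {d : ℕ} (a : Fin d → ℤ) (x : Fin d → ℝ) : pair (-a) x = -pair a x := by
  simp [pair, Finset.sum_neg_distrib]

lemma lin_expand {d d' : ℕ} (f : (Fin d → ℝ) →ₗ[ℝ] (Fin d' → ℝ)) (x : Fin d → ℝ) :
    f x = ∑ i, x i • f (Pi.single i 1) := by
  conv_lhs => rw [← Finset.univ_sum_single x]
  rw [map_sum]
  refine Finset.sum_congr rfl fun i _ => ?_
  have : (Pi.single i (x i) : Fin d → ℝ) = x i • (Pi.single i 1 : Fin d → ℝ) := by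
    rw [← Pi.single_smul, smul_eq_mul, mul_one]
  rw [this, map_smul]

lemma pair_continuous {d : ℕ} (a : Fin d → ℤ) : Continuous (pair a) := by
  unfold pair
  exact continuous_finset_sum _ fun i _ => continuous_const.mul (continuous_apply i)

lemma abs_sign_le_one (n : ℤ) : |n.sign| ≤ 1 := by
  rcases lt_trichotomy n 0 with h|h|h
  · simp [Int.sign_eq_neg_one_of_neg h]
  · simp [h]
  · simp [Int.sign_eq_one_of_pos h]

end aux

/-- the Fine ℚ-codegree does not increase under lattice-preserving
surjective linear projections. -/
theorem stmt_3 {d d' : ℕ} (hd' : 1 ≤ d') (hdd : d' ≤ d)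
    (π : (Fin d → ℝ) →ₗ[ℝ] (Fin d' → ℝ)) (hsurj : Function.Surjective π)
    (hlat : π '' intPts d = intPts d')
    (P : Set (Fin d → ℝ)) (hP : IsRationalPolytope P) (hfull : IsFullDim P) :
    fineCodeg (π '' P) ≤ fineCodeg P := by
  classical
  -- the matrix of π is integral
  have hsingle : ∀ i j, ∃ n : ℤ, π (Pi.single i 1) j = (n : ℝ) := by
    intro i j
    have hmem : π (Pi.single i 1) ∈ intPts d' := by
      rw [← hlat]
      refine ⟨Pi.single i 1, fun k => ⟨if k = i then 1 else 0, ?_⟩, rfl⟩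
      rw [Pi.single_apply]; split <;> simp
    exact hmem j
  choose M hM using hsingle
  have hπ : ∀ (x : Fin d → ℝ) (j : Fin d'), π x j = ∑ i, x i * (M i j : ℝ) := by
    intro x j
    rw [lin_expand π x]
    rw [Finset.sum_apply]
    refine Finset.sum_congr rfl fun i _ => ?_
    rw [Pi.smul_apply, hM, smul_eq_mul]
  -- pullback of a functional
  set pb : (Fin d' → ℤ) → (Fin d → ℤ) := fun a' i => ∑ j, a' j * M i j with hpb
  have hpair : ∀ (a' : Fin d' → ℤ) (x : Fin d → ℝ), pair (pb a') x = pair a' (π x) := by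
    intro a' x
    unfold pair
    have : ∀ j, (a' j : ℝ) * π x j = ∑ i, (a' j : ℝ) * ((M i j : ℝ) * x i) := by
      intro j
      rw [hπ, Finset.mul_sum]
      exact Finset.sum_congr rfl fun i _ => by ring
    simp only [this]
    rw [Finset.sum_comm]
    refine Finset.sum_congr rfl fun i _ => ?_
    rw [hpb]
    push_cast
    rw [Finset.sum_mul]
    exact Finset.sum_congr rfl fun j _ => by ring
  have hpb0 : ∀ a' : Fin d' → ℤ, a' ≠ 0 → pb a' ≠ 0 := by
    intro a' ha' h0
    apply ha'
    have hz : ∀ x : Fin d → ℝ, pair a' (π x) = 0 := by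
      intro x
      rw [← hpair]
      simp [pair, h0]
    obtain ⟨x, hx⟩ := hsurj (fun j => (a' j : ℝ))
    have := hz x
    rw [hx] at this
    have hsum : ∑ j, ((a' j : ℝ))^2 = 0 := by
      rw [← this]; unfold pair
      exact Finset.sum_congr rfl fun j _ => by simp [sq]
    funext j
    have hj := (Finset.sum_eq_zero_iff_of_nonneg
      (fun j _ => sq_nonneg ((a' j : ℝ)))).1 hsum j (Finset.mem_univ j)
    have : (a' j : ℝ) = 0 := by
      have := sq_eq_zero_iff.1 hj
      exact this
    exact_mod_cast this
  have hsupp : ∀ a' : Fin d' → ℤ, suppFn (π '' P) a' = suppFn P (pb a') := by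
    intro a'
    unfold suppFn
    congr 1
    rw [Set.image_image]
    exact Set.image_congr fun x _ => (hpair a' x).symm
  -- the two sets of feasible s
  set A := {s : ℝ | 0 < s ∧ (fineAdjoint P s).Nonempty} with hA
  set B := {s : ℝ | 0 < s ∧ (fineAdjoint (π '' P) s).Nonempty} with hB
  have hAB : A ⊆ B := by
    rintro s ⟨hs, x, hx⟩
    refine ⟨hs, π x, fun a' ha' => ?_⟩
    rw [hsupp, ← hpair]
    exact hx _ (hpb0 a' ha')
  -- B is bounded above
  have hBbdd : BddAbove B := by
    set e : Fin d' → ℤ := Pi.single ⟨0, hd'⟩ 1 with he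
    have he0 : e ≠ 0 := by
      intro h
      have := congrFun h ⟨0, hd'⟩
      simp [he] at this
    refine ⟨(-(suppFn (π '' P) e + suppFn (π '' P) (-e)))/2, ?_⟩
    rintro s ⟨hs, y, hy⟩
    have h1 := hy e he0
    have h2 := hy (-e) (neg_ne_zero.2 he0)
    rw [pair_neg'] at h2
    linarith
  have hABbdd : BddAbove A := hBbdd.mono hAB
  -- A is nonempty: interior point argument
  obtain ⟨V, hVne, hVrat, hPV⟩ := hP
  have hconv : Convex ℝ P := hPV ▸ convex_convexHull ℝ _
  have hcomp : IsCompact P := hPV ▸ V.finite_toSet.isCompact_convexHull ℝ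
  have hint : (interior P).Nonempty :=
    (hconv.interior_nonempty_iff_affineSpan_eq_top).2 hfull
  obtain ⟨x, hx⟩ := hint
  obtain ⟨ε, hε, hball⟩ := Metric.mem_nhds_iff.1 (mem_interior_iff_mem_nhds.1 hx)
  have hbdd : ∀ a : Fin d → ℤ, BddBelow (pair a '' P) :=
    fun a => (hcomp.image (pair_continuous a)).bddBelow
  have hxadj : x ∈ fineAdjoint P (ε/2) := by
    intro a ha
    set y : Fin d → ℝ := fun i => x i - (ε/2) * ((a i).sign : ℝ) with hy
    have hymem : y ∈ P := by
      apply hball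
      rw [Metric.mem_ball, dist_pi_lt_iff hε]
      intro i
      rw [Real.dist_eq]
      have : |y i - x i| = (ε/2) * |((a i).sign : ℝ)| := by
        rw [hy]
        simp [abs_mul, abs_of_pos (half_pos hε)]
      rw [this]
      have habs : |((a i).sign : ℝ)| ≤ 1 := by
        have := abs_sign_le_one (a i)
        calc |((a i).sign : ℝ)| = (|(a i).sign| : ℤ) := by push_cast; rfl
          _ ≤ 1 := by exact_mod_cast this
      nlinarith
    have hpay : pair a y = pair a x - (ε/2) * ∑ i, |(a i : ℝ)| := by
      unfold pair
      rw [Finset.mul_sum, ← Finset.sum_sub_distrib]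
      refine Finset.sum_congr rfl fun i _ => ?_
      rw [hy]
      have hms : (a i : ℝ) * ((a i).sign : ℝ) = |(a i : ℝ)| := by
        have h2 : ((a i * (a i).sign : ℤ) : ℝ) = ((a i).natAbs : ℤ) := by
          exact_mod_cast Int.mul_sign_self (a i)
        push_cast at h2
        exact h2
      ring_nf
      nlinarith [hms]
    have hsum1 : (1 : ℝ) ≤ ∑ i, |(a i : ℝ)| := by
      obtain ⟨i0, hi0⟩ := Function.ne_iff.1 ha
      have h1 : (1 : ℝ) ≤ |(a i0 : ℝ)| := by
        have : (1 : ℤ) ≤ |a i0| := Int.one_le_abs hi0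
        calc (1:ℝ) = ((1:ℤ):ℝ) := by norm_num
          _ ≤ (|a i0| : ℝ) := by exact_mod_cast this
          _ = |(a i0 : ℝ)| := by push_cast; rfl
      calc (1:ℝ) ≤ |(a i0 : ℝ)| := h1
        _ ≤ ∑ i, |(a i : ℝ)| :=
          Finset.single_le_sum (f := fun i => |(a i : ℝ)|) (fun i _ => abs_nonneg _) (Finset.mem_univ i0)
    have hle : suppFn P a ≤ pair a y := csInf_le (hbdd a) ⟨y, hymem, rfl⟩
    have : pair a y ≤ pair a x - ε/2 := by
      rw [hpay]
      nlinarith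
    linarith
  have hAmem : ε/2 ∈ A := ⟨half_pos hε, x, hxadj⟩
  -- conclude
  have h1 : fineNumber P ≤ fineNumber (π '' P) := csSup_le_csSup hBbdd ⟨ε/2, hAmem⟩ hAB
  have h2 : 0 < fineNumber P := lt_of_lt_of_le (half_pos hε) (le_csSup hABbdd hAmem)
  unfold fineCodeg
  exact inv_anti₀ h2 h1
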